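/- Let T₁, T₂: V → g be compatible O-operators on a bimodule (V; L, R) over a pre-Lie algebra (g, ·), with T₂ invertible. Then setting N = T₁T₂⁻¹ and S = T₂⁻¹T₁, the pair (N, S) is a Nijenhuis structure on the bimodule, i.e., N is a Nijenhuis operator on g and L_{N(x)}S(v) = S(L_{N(x)}v) + L_x S²(v) − S(L_x S(v)) and R_{N(x)}S(v) = S(R_{N(x)}v) + R_x S²(v) − S(R_x S(v)) for all x ∈ g, v ∈ V; moreover (T₂, N, S) is an ON-structure (T₂∘S = N∘T₂ and u·^{N∘T₂}v = S(u)·^{T₂}v + u·^{T₂}S(v) − S(u·^{T₂}v)). -/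
import Mathlib


def PreLieFn {g : Type*} [AddCommGroup g] (m : g → g → g) : Prop :=
  ∀ x y z : g, m (m x y) z - m x (m y z) = m (m y x) z - m y (m x z)

def BimodFn {g V : Type*} [AddCommGroup g] [AddCommGroup V]
    (m : g → g → g) (L R : g → V → V) : Prop :=
  (∀ (x y : g) (u : V), L x (L y u) - L (m x y) u = L y (L x u) - L (m y x) u) ∧
  (∀ (x y : g) (u : V), L x (R y u) - R y (L x u) = R (m x y) u - R y (R x u))

def NijFn {g : Type*} [AddCommGroup g] (m : g → g → g) (N : g → g) : Prop :=
  ∀ x y : g, m (N x) (N y) = N (m (N x) y + m x (N y) - N (m x y))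

def IsOOp {K g V : Type*} [Field K] [AddCommGroup g] [Module K g]
    [AddCommGroup V] [Module K V]
    (m : g →ₗ[K] g →ₗ[K] g) (L R : g →ₗ[K] Module.End K V) (T : V →ₗ[K] g) : Prop :=
  ∀ u v : V, m (T u) (T v) = T (L (T u) v + R (T v) u)

/-- if T₁, T₂ are compatible O-operators with T₂ invertible, then
with N = T₁T₂⁻¹ and S = T₂⁻¹T₁, (N,S) is a Nijenhuis structure and (T₂, N, S)
is an ON-structure. -/
theorem compatible_O_operators_ON_structure {K g V : Type*} [Field K]
    [AddCommGroup g] [Module K g] [AddCommGroup V] [Module K V]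
    (m : g →ₗ[K] g →ₗ[K] g) (hm : PreLieFn (fun x y => m x y))
    (L R : g →ₗ[K] Module.End K V)
    (hb : BimodFn (fun x y => m x y) (fun x u => L x u) (fun x u => R x u))
    (T₁ : V →ₗ[K] g) (e : V ≃ₗ[K] g)
    (hT₁ : IsOOp m L R T₁) (hT₂ : IsOOp m L R (e : V →ₗ[K] g))
    (hcompat : ∀ k₁ k₂ : K, IsOOp m L R (k₁ • T₁ + k₂ • (e : V →ₗ[K] g))) :
    NijFn (fun x y => m x y) (fun x : g => T₁ (e.symm x)) ∧
    (∀ (x : g) (v : V),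
      L (T₁ (e.symm x)) (e.symm (T₁ v)) =
        e.symm (T₁ (L (T₁ (e.symm x)) v)) + L x (e.symm (T₁ (e.symm (T₁ v)))) -
          e.symm (T₁ (L x (e.symm (T₁ v))))) ∧
    (∀ (x : g) (v : V),
      R (T₁ (e.symm x)) (e.symm (T₁ v)) =
        e.symm (T₁ (R (T₁ (e.symm x)) v)) + R x (e.symm (T₁ (e.symm (T₁ v)))) -
          e.symm (T₁ (R x (e.symm (T₁ v))))) ∧
    (∀ v : V, e (e.symm (T₁ v)) = T₁ (e.symm (e v))) ∧
    (∀ u v : V,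
      L (T₁ (e.symm (e u))) v + R (T₁ (e.symm (e v))) u =
        (L (e (e.symm (T₁ u))) v + R (e v) (e.symm (T₁ u))) +
        (L (e u) (e.symm (T₁ v)) + R (e (e.symm (T₁ v))) u) -
        e.symm (T₁ (L (e u) v + R (e v) u))) := by
  -- Key identity (A): from hT₁ and hT₂ applied to (S u, S v)
  have hA : ∀ u v : V, T₁ (L (T₁ u) v) + T₁ (R (T₁ v) u)
      = e (L (T₁ u) (e.symm (T₁ v))) + e (R (T₁ v) (e.symm (T₁ u))) := by
    intro u v
    have h1 := hT₁ u v
    have h2 := hT₂ (e.symm (T₁ u)) (e.symm (T₁ v))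
    simp only [LinearEquiv.coe_coe, LinearEquiv.apply_symm_apply, map_add] at h1 h2
    linear_combination (norm := abel) h2 - h1
  -- Key identity (K): from compatibility
  have hK : ∀ u v : V, T₁ (L (e u) v) + T₁ (R (e v) u)
      = e (L (e u) (e.symm (T₁ v))) + e (R (e v) (e.symm (T₁ u))) := by
    intro u v
    have h1 := hT₁ u v
    have h2 := hT₂ u v
    have h3 := hT₂ (e.symm (T₁ u)) v
    have h4 := hT₂ u (e.symm (T₁ v))
    have hc := hcompat 1 1 u v
    simp only [LinearMap.add_apply, LinearMap.smul_apply, one_smul, LinearEquiv.coe_coe,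
      LinearEquiv.apply_symm_apply, map_add, LinearMap.add_apply] at h1 h2 h3 h4 hc
    linear_combination (norm := abel) h1 + h2 + h3 + h4 - hc
  have hin : ∀ u v : V, m (T₁ u) (e v) + m (e u) (T₁ v) - T₁ (e.symm (m (e u) (e v)))
      = e (L (T₁ u) v + R (T₁ v) u) := by
    intro u v
    have h2 := hT₂ u v
    have h3 := hT₂ (e.symm (T₁ u)) v
    have h4 := hT₂ u (e.symm (T₁ v))
    have hk := hK u v
    simp only [LinearEquiv.coe_coe, LinearEquiv.apply_symm_apply, map_add] at h2 h3 h4 ⊢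
    rw [h2]
    simp only [map_add, LinearEquiv.symm_apply_apply]
    linear_combination (norm := abel) h3 + h4 - hk
  refine ⟨?_, ?_, ?_, ?_, ?_⟩
  · intro x y
    obtain ⟨u, rfl⟩ := e.surjective x
    obtain ⟨v, rfl⟩ := e.surjective y
    simp only [LinearEquiv.symm_apply_apply]
    rw [hin u v, LinearEquiv.symm_apply_apply]
    exact hT₁ u v
  · intro x v
    obtain ⟨u, rfl⟩ := e.surjective x
    apply e.injective
    have hk := hK u (e.symm (T₁ v))
    have ha := hA u v
    simp only [LinearEquiv.apply_symm_apply] at hk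
    simp only [map_add, map_sub, LinearEquiv.apply_symm_apply, LinearEquiv.symm_apply_apply]
    linear_combination (norm := abel) hk - ha
  · intro x v
    obtain ⟨u, rfl⟩ := e.surjective x
    apply e.injective
    have hk := hK (e.symm (T₁ v)) u
    have ha := hA v u
    simp only [LinearEquiv.apply_symm_apply] at hk
    simp only [map_add, map_sub, LinearEquiv.apply_symm_apply, LinearEquiv.symm_apply_apply]
    linear_combination (norm := abel) hk - ha
  · intro v
    simp
  · intro u v
    apply e.injective
    have hk := hK u v
    simp only [map_add, map_sub, LinearEquiv.apply_symm_apply, LinearEquiv.symm_apply_apply]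
    linear_combination (norm := abel) hk
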